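/- arXiv:2110.06325 — 4 statements merged into one kernel-verified Lean document; each statement's English description precedes it below -/
import Mathlib

section
/- Let ε ∈ (0,1), δ ∈ (0,1), L > 0, and let c₀ ≥ max{28212, m₀, 2L}. Let T be the (random) total number of samples observed by the Adaptive Binning Coincidence test before it terminates, under an i.i.d. sequence of samples drawn from the uniform distribution on [0,1]. There exists a constant C > 0 (depending only on c₀) such that E[T] ≤ C · ε⁻⁶ · log(1/ε + 1/δ). -/
open MeasureTheory ProbabilityTheory
open scoped Classical

/-- The binned coincidence statistic `K₁(S; m)`: the number of bins `[i/m, (i+1)/m)`,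
`i = 0,…,m-1`, containing exactly one of the first `n` samples of the sequence `x`. -/
noncomputable def K1bin (x : ℕ → ℝ) (n m : ℕ) : ℕ :=
  ((Finset.range m).filter fun i =>
    ((Finset.range n).filter fun t =>
      (i : ℝ) / (m : ℝ) ≤ x t ∧ x t < ((i : ℝ) + 1) / (m : ℝ)).card = 1).card

/-- `c_u(n; m) = n (1 - 1/m)^(n-1)`, the expected coincidence number of `n` uniform samples
binned into `m` bins. -/
noncomputable def cU (m n : ℕ) : ℝ := (n : ℝ) * (1 - 1 / (m : ℝ)) ^ (n - 1)

/-- Maximum number of epochs of the ABC test: `κ = ⌈576 ε⁻²⌉`. -/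
noncomputable def abcKappa (ε : ℝ) : ℕ := ⌈576 * ε⁻¹ ^ 2⌉₊

/-- Number of bins in epoch `k`: `m_k = ⌈c₀ k⁴ log(k + 2/δ)⌉`. -/
noncomputable def abcM (c₀ δ : ℝ) (k : ℕ) : ℕ :=
  ⌈c₀ * (k : ℝ) ^ 4 * Real.log ((k : ℝ) + 2 / δ)⌉₊

/-- Number of samples at the end of epoch `k`: `n_k = ⌈√c₀ k³ log(k + 2/δ)⌉`. -/
noncomputable def abcN (c₀ δ : ℝ) (k : ℕ) : ℕ :=
  ⌈Real.sqrt c₀ * (k : ℝ) ^ 3 * Real.log ((k : ℝ) + 2 / δ)⌉₊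

/-- Threshold at epoch `k`: `τ_k = 9 n_k √(log(k + 2/δ)/m_k)`. -/
noncomputable def abcTau (c₀ δ : ℝ) (k : ℕ) : ℝ :=
  9 * (abcN c₀ δ k : ℝ) * Real.sqrt (Real.log ((k : ℝ) + 2 / δ) / (abcM c₀ δ k : ℝ))

/-- `m₀ = min { l : ℕ | 1123 l^(1/4) e^(-0.25 √l) ≤ δ ε² }`. -/
noncomputable def m0 (ε δ : ℝ) : ℕ :=
  sInf {l : ℕ | 1123 * (l : ℝ) ^ ((1 : ℝ) / 4) * Real.exp (-0.25 * Real.sqrt (l : ℝ))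
    ≤ δ * ε ^ 2}

/-- The uniform distribution on `[0,1]` (Lebesgue measure restricted to `[0,1]`). -/
noncomputable def unif01 : Measure ℝ := volume.restrict (Set.Icc (0 : ℝ) 1)

/-- The total number of samples observed by the ABC test at termination: `n_{k*}`, where
`k*` is the first epoch `k ∈ [1, κ]` at which
`c_u(n_k; m_k) - K₁({X₁,…,X_{n_k}}; m_k) > τ_k` (declare `H₁`), and `k* = κ` if no such
epoch exists (declare `H₀`). -/
noncomputable def abcT (ε δ c₀ : ℝ) {Ω : Type*} (X : ℕ → Ω → ℝ) (ω : Ω) : ℕ :=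
  abcN c₀ δ
    (if h : ∃ k, (1 ≤ k ∧ k ≤ abcKappa ε) ∧
        cU (abcM c₀ δ k) (abcN c₀ δ k)
            - (K1bin (fun i => X i ω) (abcN c₀ δ k) (abcM c₀ δ k) : ℝ) > abcTau c₀ δ k
      then Nat.find h else abcKappa ε)

lemma abcN_le_abcN (c₀ δ : ℝ) (hδ0 : 0 < δ) (hδ1 : δ < 1) {j k : ℕ} (hjk : j ≤ k) :
    abcN c₀ δ j ≤ abcN c₀ δ k := by
  unfold abcN
  apply Nat.ceil_le_ceil
  have h2δ : (2 : ℝ) ≤ 2 / δ := by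
    rw [le_div_iff₀ hδ0]; nlinarith
  have hjr : (j : ℝ) ≤ (k : ℝ) := Nat.cast_le.mpr hjk
  have hlognn : 0 ≤ Real.log ((j : ℝ) + 2 / δ) := by
    apply Real.log_nonneg
    have : (0 : ℝ) ≤ (j : ℝ) := Nat.cast_nonneg _
    linarith
  have hlogle : Real.log ((j : ℝ) + 2 / δ) ≤ Real.log ((k : ℝ) + 2 / δ) := by
    apply Real.log_le_log (by positivity)
    linarith
  apply mul_le_mul _ hlogle hlognn
  · apply mul_nonneg (Real.sqrt_nonneg _) (by positivity)
  · exact mul_le_mul_of_nonneg_left (pow_le_pow_left₀ (Nat.cast_nonneg _) hjr 3)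
      (Real.sqrt_nonneg _)

lemma abcT_le_abcN (ε δ c₀ : ℝ) (hδ0 : 0 < δ) (hδ1 : δ < 1) {Ω : Type*}
    (X : ℕ → Ω → ℝ) (ω : Ω) :
    abcT ε δ c₀ X ω ≤ abcN c₀ δ (abcKappa ε) := by
  unfold abcT
  split_ifs with h
  · exact abcN_le_abcN c₀ δ hδ0 hδ1 (Nat.find_spec h).1.2
  · exact le_refl _

set_option maxHeartbeats 1600000 in
/-- Expected sample complexity of the ABC test under the null (uniform)
hypothesis.  For every `c₀` there is a constant `C > 0` (depending only on `c₀`) such that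
for all `ε, δ ∈ (0,1)`, `L > 0` with `c₀ ≥ max{28212, m₀, 2L}`, for an i.i.d. sequence of
samples from the uniform distribution on `[0,1]`, the expected number of samples at
termination satisfies `E[T] ≤ C ε⁻⁶ log(1/ε + 1/δ)`. -/
theorem abc_sample_complexity_null (c₀ : ℝ) :
    ∃ C : ℝ, 0 < C ∧
      ∀ (ε δ L : ℝ), ε ∈ Set.Ioo (0 : ℝ) 1 → δ ∈ Set.Ioo (0 : ℝ) 1 → 0 < L →
        (28212 : ℝ) ≤ c₀ → (m0 ε δ : ℝ) ≤ c₀ → 2 * L ≤ c₀ →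
        ∀ (Ω : Type) (_ : MeasurableSpace Ω) (P : Measure Ω), IsProbabilityMeasure P →
        ∀ X : ℕ → Ω → ℝ, (∀ i, Measurable (X i)) →
          iIndepFun X P →
          (∀ i, Measure.map (X i) P = unif01) →
          ∫ ω, (abcT ε δ c₀ X ω : ℝ) ∂P
            ≤ C * ε⁻¹ ^ 6 * Real.log (1 / ε + 1 / δ) := by
  refine ⟨13 * 577 ^ 3 * (Real.sqrt c₀ + 1) + 2, by positivity, ?_⟩
  rintro ε δ L ⟨hε0, hε1⟩ ⟨hδ0, hδ1⟩ hL hc1 hc2 hc3 Ω mΩ P hP X hX hind hmap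
  have hc0 : (0 : ℝ) ≤ c₀ := by linarith
  set κ := abcKappa ε with hκdef
  set N : ℝ := (abcN c₀ δ κ : ℝ) with hNdef
  -- Step 1: the integral is bounded by N
  have hbound : ∫ ω, (abcT ε δ c₀ X ω : ℝ) ∂P ≤ N := by
    have hnorm : ∀ᵐ ω ∂P, ‖(abcT ε δ c₀ X ω : ℝ)‖ ≤ N := by
      filter_upwards with ω
      rw [Real.norm_eq_abs, abs_of_nonneg (Nat.cast_nonneg _), hNdef, hκdef]
      exact_mod_cast abcT_le_abcN ε δ c₀ hδ0 hδ1 X ω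
    have h := norm_integral_le_of_norm_le_const (μ := P)
      (f := fun ω => (abcT ε δ c₀ X ω : ℝ)) hnorm
    simp only [measure_univ, probReal_univ, ENNReal.toReal_one, mul_one] at h
    calc ∫ ω, (abcT ε δ c₀ X ω : ℝ) ∂P ≤ ‖∫ ω, (abcT ε δ c₀ X ω : ℝ) ∂P‖ :=
          le_abs_self _
      _ ≤ N := h
  -- Arithmetic setup
  have hεinv : (1 : ℝ) ≤ ε⁻¹ := by
    have := mul_inv_cancel₀ (ne_of_gt hε0)
    nlinarith
  have hδinv : (1 : ℝ) ≤ δ⁻¹ := by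
    have := mul_inv_cancel₀ (ne_of_gt hδ0)
    nlinarith
  set s : ℝ := ε⁻¹ + δ⁻¹ with hsdef
  have hs2 : (2 : ℝ) ≤ s := by simp only [hsdef]; linarith
  have hlogs : Real.log 2 ≤ Real.log s := Real.log_le_log two_pos (by linarith)
  have hlog2 : (0.6 : ℝ) ≤ Real.log 2 := by
    have := Real.log_two_gt_d9; linarith
  have hlogsnn : (0 : ℝ) ≤ Real.log s := by linarith
  have hεinv2 : (1 : ℝ) ≤ ε⁻¹ ^ 2 := one_le_pow₀ hεinv
  have hεinv6 : (1 : ℝ) ≤ ε⁻¹ ^ 6 := one_le_pow₀ hεinv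
  -- bound κ
  have hκε : (κ : ℝ) ≤ 577 * ε⁻¹ ^ 2 := by
    have h := Nat.ceil_lt_add_one (show (0 : ℝ) ≤ 576 * ε⁻¹ ^ 2 by positivity)
    simp only [hκdef, abcKappa]
    linarith
  have h2δ : (2 : ℝ) ≤ 2 / δ := by rw [le_div_iff₀ hδ0]; nlinarith
  have hκpos : (1 : ℝ) ≤ (κ : ℝ) + 2 / δ := by
    have : (0 : ℝ) ≤ (κ : ℝ) := Nat.cast_nonneg _
    linarith
  have hlognn : 0 ≤ Real.log ((κ : ℝ) + 2 / δ) := Real.log_nonneg hκpos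
  -- bound log(κ + 2/δ)
  have hlogκ : Real.log ((κ : ℝ) + 2 / δ) ≤ 13 * Real.log s := by
    have hss : s ≤ s ^ 2 := by nlinarith [hs2]
    have hδs : δ⁻¹ ≤ s ^ 2 := le_trans (by simp only [hsdef]; linarith) hss
    have h2div : 2 / δ = 2 * δ⁻¹ := by rw [div_eq_mul_inv]
    have hεs : ε⁻¹ ^ 2 ≤ s ^ 2 := by
      apply pow_le_pow_left₀ (by positivity)
      simp only [hsdef]; linarith
    have hle : (κ : ℝ) + 2 / δ ≤ 579 * s ^ 2 := by
      rw [h2div]; linarith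
    have h579 : Real.log 579 ≤ 11 * Real.log s := by
      have h1 : Real.log 579 ≤ Real.log (2 ^ 11) :=
        Real.log_le_log (by norm_num) (by norm_num)
      rw [Real.log_pow] at h1
      push_cast at h1
      nlinarith
    calc Real.log ((κ : ℝ) + 2 / δ) ≤ Real.log (579 * s ^ 2) :=
          Real.log_le_log (by linarith) hle
      _ = Real.log 579 + 2 * Real.log s := by
          rw [Real.log_mul (by norm_num) (by positivity), Real.log_pow]
          push_cast; ring
      _ ≤ 13 * Real.log s := by linarith
  -- bound N
  have hN1 : N ≤ Real.sqrt c₀ * (κ : ℝ) ^ 3 * Real.log ((κ : ℝ) + 2 / δ) + 1 := by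
    have hx : (0 : ℝ) ≤ Real.sqrt c₀ * (κ : ℝ) ^ 3 * Real.log ((κ : ℝ) + 2 / δ) := by
      apply mul_nonneg (mul_nonneg (Real.sqrt_nonneg _) (by positivity)) hlognn
    have h := Nat.ceil_lt_add_one hx
    simp only [hNdef, abcN]
    linarith
  have hκ3 : (κ : ℝ) ^ 3 ≤ (577 * ε⁻¹ ^ 2) ^ 3 :=
    pow_le_pow_left₀ (Nat.cast_nonneg _) hκε 3
  have hmain : Real.sqrt c₀ * (κ : ℝ) ^ 3 * Real.log ((κ : ℝ) + 2 / δ)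
      ≤ (13 * 577 ^ 3 * Real.sqrt c₀) * (ε⁻¹ ^ 6 * Real.log s) := by
    have key : Real.sqrt c₀ * (κ : ℝ) ^ 3 * Real.log ((κ : ℝ) + 2 / δ)
        ≤ Real.sqrt c₀ * (577 * ε⁻¹ ^ 2) ^ 3 * (13 * Real.log s) := by
      apply mul_le_mul _ hlogκ hlognn
      · apply mul_nonneg (Real.sqrt_nonneg _) (by positivity)
      · exact mul_le_mul_of_nonneg_left hκ3 (Real.sqrt_nonneg _)
    have heq : Real.sqrt c₀ * (577 * ε⁻¹ ^ 2) ^ 3 * (13 * Real.log s)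
        = (13 * 577 ^ 3 * Real.sqrt c₀) * (ε⁻¹ ^ 6 * Real.log s) := by ring
    linarith
  have h1le : (1 : ℝ) ≤ 2 * (ε⁻¹ ^ 6 * Real.log s) := by nlinarith
  have hprodnn : (0 : ℝ) ≤ ε⁻¹ ^ 6 * Real.log s := by positivity
  have hfinal : N ≤ (13 * 577 ^ 3 * (Real.sqrt c₀ + 1) + 2) * (ε⁻¹ ^ 6 * Real.log s) := by
    have hsq : (0 : ℝ) ≤ Real.sqrt c₀ := Real.sqrt_nonneg _
    nlinarith
  have hrw : (1 : ℝ) / ε + 1 / δ = s := by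
    simp only [hsdef, one_div]
  rw [hrw, mul_assoc]
  linarith
end

section
/- Let p be a probability measure on [0,1] with an L-Lipschitz density f, and let γ = ∫₀¹ |f(x) − 1| dx. For a positive integer m, let p^Δ be the discrete distribution on {0,1,…,m−1} obtained by uniform discretization into m bins, i.e., p^Δ_i = ∫_{i/m}^{(i+1)/m} f(x) dx. Then the ℓ¹ distance of p^Δ to the uniform distribution on m symbols satisfies Σ_{i=0}^{m−1} |p^Δ_i − 1/m| ≥ γ − L/m. In particular, if m ≥ L/(2γ), then Σ_{i=0}^{m−1} |p^Δ_i − 1/m| ≥ γ/2. -/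
open Set MeasureTheory intervalIntegral

private lemma lemA (L : ℝ) (hL : 0 < L) (φ : ℝ → ℝ)
    (hLip : ∀ x y, |φ x - φ y| ≤ L * |x - y|)
    (hnn : ∀ x, 0 ≤ φ x)
    (a b : ℝ) (hab : a ≤ b) (z : ℝ) (hz : z ∈ Set.Icc a b) (hz0 : φ z = 0)
    (s : ℝ) (hs0 : 0 ≤ s)
    (hs : (volume {x | x ∈ Set.Icc a b ∧ 0 < φ x}).toReal ≤ s) :
    (∫ x in a..b, φ x) ≤ L * s ^ 2 / 2 := by
  have hcont : Continuous φ := by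
    have h : LipschitzWith (Real.toNNReal L) φ := by
      apply LipschitzWith.of_dist_le_mul
      intro x y
      rw [Real.dist_eq, Real.dist_eq, Real.coe_toNNReal L hL.le]
      exact hLip x y
    exact h.continuous
  set S : Set ℝ := {x | x ∈ Set.Icc a b ∧ 0 < φ x} with hS
  have hSmeas : MeasurableSet S := by
    have h : S = Set.Icc a b ∩ φ ⁻¹' (Set.Ioi 0) := by
      ext x
      simp only [hS, Set.mem_setOf_eq, Set.mem_inter_iff, Set.mem_preimage, Set.mem_Ioi]
    rw [h]
    exact measurableSet_Icc.inter (hcont.measurable measurableSet_Ioi)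
  have hSsub : S ⊆ Set.Icc a b := fun x hx => hx.1
  have hSfin : volume S < ⊤ :=
    lt_of_le_of_lt (measure_mono hSsub) (by simp)
  have hSs : volume S ≤ ENNReal.ofReal s := by
    rw [← ENNReal.ofReal_toReal hSfin.ne]
    exact ENNReal.ofReal_le_ofReal hs
  have claim : ∀ t : ℝ, 0 < t →
      volume ({x | t < φ x} ∩ Set.Icc a b) ≤ ENNReal.ofReal (s - t / L) := by
    intro t ht
    set St : Set ℝ := {x | t < φ x} ∩ Set.Icc a b with hSt
    have hStmeas : MeasurableSet St :=
      (hcont.measurable measurableSet_Ioi).inter measurableSet_Icc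
    have hStS : St ⊆ S := fun x hx => ⟨hx.2, lt_trans ht hx.1⟩
    rcases Set.eq_empty_or_nonempty St with hemp | hne
    · rw [hemp]; simp
    have htL : 0 < t / L := div_pos ht hL
    have key : ∃ I : Set ℝ, MeasurableSet I ∧ I ⊆ S ∧ Disjoint St I ∧
        volume I = ENNReal.ofReal (t / L) := by
      by_cases hcase : (St ∩ Set.Ici z).Nonempty
      · set T := St ∩ Set.Ici z with hT
        have hTbdd : BddBelow T := ⟨a, fun x hx => hx.1.2.1⟩
        set c := sInf T with hc
        have hzc : z ≤ c := le_csInf hcase (fun x hx => hx.2)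
        have hcb : c ≤ b := by
          obtain ⟨w, hw⟩ := hcase
          exact le_trans (csInf_le hTbdd hw) hw.1.2.2
        have hca : a ≤ c := le_trans hz.1 hzc
        have hφc : t ≤ φ c := by
          by_contra hlt
          push_neg at hlt
          obtain ⟨x, hxT, hxlt⟩ := Real.lt_sInf_add_pos hcase
            (show (0:ℝ) < (t - φ c) / L from div_pos (by linarith) hL)
          have hcx : c ≤ x := csInf_le hTbdd hxT
          have h1 : |φ x - φ c| ≤ L * |x - c| := hLip x c
          have h2 : |x - c| < (t - φ c) / L := by
            rw [abs_of_nonneg (by linarith)]; linarith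
          have h4 : L * |x - c| < L * ((t - φ c) / L) := (mul_lt_mul_iff_right₀ hL).mpr h2
          rw [mul_div_cancel₀ _ hL.ne'] at h4
          have h5 := le_of_abs_le h1
          have h6 : φ x < t := by linarith
          exact absurd hxT.1.1 (not_lt.mpr h6.le)
        have hczL : t / L ≤ c - z := by
          have h1 : |φ c - φ z| ≤ L * |c - z| := hLip c z
          rw [hz0, sub_zero, abs_of_nonneg (hnn c), abs_of_nonneg (by linarith)] at h1
          rw [div_le_iff₀ hL]
          linarith
        refine ⟨Set.Ioo (c - t / L) c, measurableSet_Ioo, ?_, ?_, ?_⟩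
        · intro y hy
          obtain ⟨hy1, hy2⟩ := hy
          have hya : a ≤ y := by
            have := hz.1; linarith
          have hyb : y ≤ b := by linarith
          have h1 : |φ c - φ y| ≤ L * |c - y| := hLip c y
          have h2 : |c - y| < t / L := by rw [abs_of_nonneg (by linarith)]; linarith
          have h4 : L * |c - y| < L * (t / L) := (mul_lt_mul_iff_right₀ hL).mpr h2
          rw [mul_div_cancel₀ _ hL.ne'] at h4
          have h5 := le_of_abs_le h1
          exact ⟨⟨hya, hyb⟩, by linarith⟩
        · rw [Set.disjoint_right]
          intro y hy hySt
          have hyT : y ∈ T := ⟨hySt, show z ≤ y by linarith [hy.1]⟩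
          exact absurd (csInf_le hTbdd hyT) (not_le.mpr hy.2)
        · rw [Real.volume_Ioo]; congr 1; ring
      · -- all of St is to the left of z
        have hlt : ∀ x ∈ St, x < z := by
          intro x hx
          by_contra h
          exact hcase ⟨x, hx, not_lt.mp h⟩
        have hTbdd : BddAbove St := ⟨b, fun x hx => hx.2.2⟩
        set c := sSup St with hc
        have hcz : c ≤ z := csSup_le hne (fun x hx => (hlt x hx).le)
        have hca : a ≤ c := by
          obtain ⟨w, hw⟩ := hne
          exact le_trans hw.2.1 (le_csSup hTbdd hw)
        have hcb : c ≤ b := le_trans hcz hz.2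
        have hφc : t ≤ φ c := by
          by_contra hlt'
          push_neg at hlt'
          obtain ⟨x, hxT, hxlt⟩ := Real.add_neg_lt_sSup hne
            (show -((t - φ c) / L) < 0 by
              have : (0:ℝ) < (t - φ c) / L := div_pos (by linarith) hL
              linarith)
          have hcx : x ≤ c := le_csSup hTbdd hxT
          have h1 : |φ x - φ c| ≤ L * |x - c| := hLip x c
          have h2 : |x - c| < (t - φ c) / L := by
            rw [abs_of_nonpos (by linarith), neg_sub]; linarith
          have h4 : L * |x - c| < L * ((t - φ c) / L) := (mul_lt_mul_iff_right₀ hL).mpr h2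
          rw [mul_div_cancel₀ _ hL.ne'] at h4
          have h5 := le_of_abs_le h1
          have h6 : φ x < t := by linarith
          exact absurd hxT.1 (not_lt.mpr h6.le)
        have hczL : t / L ≤ z - c := by
          have h1 : |φ c - φ z| ≤ L * |c - z| := hLip c z
          rw [hz0, sub_zero, abs_of_nonneg (hnn c), abs_of_nonpos (by linarith), neg_sub] at h1
          rw [div_le_iff₀ hL]
          linarith
        refine ⟨Set.Ioo c (c + t / L), measurableSet_Ioo, ?_, ?_, ?_⟩
        · intro y hy
          obtain ⟨hy1, hy2⟩ := hy
          have hya : a ≤ y := by linarith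
          have hyb : y ≤ b := by
            have := hz.2; linarith
          have h1 : |φ c - φ y| ≤ L * |c - y| := hLip c y
          have h2 : |c - y| < t / L := by rw [abs_of_nonpos (by linarith), neg_sub]; linarith
          have h4 : L * |c - y| < L * (t / L) := (mul_lt_mul_iff_right₀ hL).mpr h2
          rw [mul_div_cancel₀ _ hL.ne'] at h4
          have h5 := le_of_abs_le h1
          exact ⟨⟨hya, hyb⟩, by linarith⟩
        · rw [Set.disjoint_right]
          intro y hy hySt
          exact absurd (le_csSup hTbdd hySt) (not_le.mpr hy.1)
        · rw [Real.volume_Ioo]; congr 1; ring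
    obtain ⟨I, hImeas, hIS, hdisj, hIvol⟩ := key
    have hadd : volume St + ENNReal.ofReal (t / L) ≤ ENNReal.ofReal s := by
      rw [← hIvol, ← measure_union hdisj hImeas]
      exact le_trans (measure_mono (Set.union_subset hStS hIS)) hSs
    calc volume St ≤ ENNReal.ofReal s - ENNReal.ofReal (t / L) :=
          ENNReal.le_sub_of_add_le_right ENNReal.ofReal_ne_top hadd
      _ = ENNReal.ofReal (s - t / L) := (ENNReal.ofReal_sub s htL.le).symm
  -- now the layer cake argument
  have hInt : IntegrableOn φ (Set.Icc a b) volume := hcont.integrableOn_Icc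
  have hlayer : (∫ x in Set.Icc a b, φ x) =
      ∫ t in Set.Ioi (0:ℝ), ((volume.restrict (Set.Icc a b)) {x | t < φ x}).toReal :=
    MeasureTheory.Integrable.integral_eq_integral_meas_lt hInt
      (Filter.Eventually.of_forall (fun x => hnn x))
  have hmeaseq : ∀ t : ℝ, (volume.restrict (Set.Icc a b)) {x | t < φ x}
      = volume ({x | t < φ x} ∩ Set.Icc a b) := by
    intro t
    have hm : MeasurableSet {x : ℝ | t < φ x} :=
      measurableSet_lt measurable_const hcont.measurable
    rw [Measure.restrict_apply hm]
  set ρ : ℝ → ℝ := fun t => max 0 (s - t / L) with hρ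
  have hρcont : Continuous ρ := by
    apply continuous_const.max
    exact continuous_const.sub (continuous_id'.div_const L)
  have hρzero : ∀ t ∈ Set.Ioi (L * s), ρ t = 0 := by
    intro t ht
    have h1 : s ≤ t / L := by
      rw [le_div_iff₀ hL]
      calc s * L = L * s := mul_comm _ _
        _ ≤ t := (Set.mem_Ioi.mp ht).le
    exact max_eq_left (by linarith)
  have hρint : IntegrableOn ρ (Set.Ioi (0:ℝ)) volume := by
    have h1 : IntegrableOn ρ (Set.Ioc 0 (L * s)) volume :=
      hρcont.integrableOn_Ioc
    have h2 : IntegrableOn ρ (Set.Ioi (L * s)) volume := by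
      apply (integrableOn_congr_fun _ measurableSet_Ioi).mpr (integrableOn_zero)
      intro t ht
      exact hρzero t ht
    have h3 := h1.union h2
    rwa [Set.Ioc_union_Ioi_eq_Ioi (by positivity)] at h3
  have hbound : (∫ t in Set.Ioi (0:ℝ),
      ((volume.restrict (Set.Icc a b)) {x | t < φ x}).toReal) ≤ ∫ t in Set.Ioi (0:ℝ), ρ t := by
    apply integral_mono_of_nonneg
    · exact Filter.Eventually.of_forall (fun t => ENNReal.toReal_nonneg)
    · exact hρint
    · rw [Filter.EventuallyLE, ae_restrict_iff' measurableSet_Ioi]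
      apply Filter.Eventually.of_forall
      intro t ht
      rw [hmeaseq t]
      have h1 := claim t ht
      calc (volume ({x | t < φ x} ∩ Set.Icc a b)).toReal
          ≤ (ENNReal.ofReal (s - t / L)).toReal :=
            ENNReal.toReal_mono ENNReal.ofReal_ne_top h1
        _ = max 0 (s - t / L) := by rw [ENNReal.toReal_ofReal', max_comm]
  have hρval : (∫ t in Set.Ioi (0:ℝ), ρ t) = L * s ^ 2 / 2 := by
    have hdisj : Disjoint (Set.Ioc (0:ℝ) (L * s)) (Set.Ioi (L * s)) :=
      Set.Ioc_disjoint_Ioi le_rfl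
    have hsplit : Set.Ioc (0:ℝ) (L * s) ∪ Set.Ioi (L * s) = Set.Ioi (0:ℝ) :=
      Set.Ioc_union_Ioi_eq_Ioi (by positivity)
    rw [← hsplit, MeasureTheory.setIntegral_union hdisj measurableSet_Ioi
      hρcont.integrableOn_Ioc ((integrableOn_congr_fun hρzero measurableSet_Ioi).mpr
        integrableOn_zero)]
    have h2 : (∫ t in Set.Ioi (L * s), ρ t) = 0 := by
      rw [MeasureTheory.setIntegral_congr_fun measurableSet_Ioi hρzero]
      simp
    have h1 : (∫ t in Set.Ioc (0:ℝ) (L * s), ρ t) = ∫ t in Set.Ioc (0:ℝ) (L * s), (s - t / L) := by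
      apply MeasureTheory.setIntegral_congr_fun measurableSet_Ioc
      intro t ht
      have : t / L ≤ s := by
        rw [div_le_iff₀ hL]
        calc t ≤ L * s := ht.2
          _ = s * L := mul_comm _ _
      exact max_eq_right (by linarith)
    rw [h1, h2, add_zero, ← intervalIntegral.integral_of_le (by positivity)]
    rw [intervalIntegral.integral_sub (continuous_const.intervalIntegrable _ _)
      ((continuous_id'.div_const L).intervalIntegrable _ _)]
    rw [intervalIntegral.integral_div, integral_id, intervalIntegral.integral_const]
    field_simp
    ring
  have hIcc : (∫ x in a..b, φ x) = ∫ x in Set.Icc a b, φ x := by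
    rw [intervalIntegral.integral_of_le hab, MeasureTheory.integral_Icc_eq_integral_Ioc]
  rw [hIcc, hlayer, ← hρval]
  exact hbound

private lemma key_half (L : ℝ) (hL : 0 < L) (g : ℝ → ℝ)
    (hLip : ∀ x y, |g x - g y| ≤ L * |x - y|)
    (a b : ℝ) (hab : a ≤ b) (hint : 0 ≤ ∫ x in a..b, g x) :
    (∫ x in a..b, |g x|) ≤ (∫ x in a..b, g x) + L * (b - a) ^ 2 / 4 := by
  rcases eq_or_lt_of_le hab with heq | hab'
  · subst heq
    simp
  have hcont : Continuous g := by
    have h : LipschitzWith (Real.toNNReal L) g := by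
      apply LipschitzWith.of_dist_le_mul
      intro x y
      rw [Real.dist_eq, Real.dist_eq, Real.coe_toNNReal L hL.le]
      exact hLip x y
    exact h.continuous
  set gp : ℝ → ℝ := fun x => max (g x) 0 with hgp
  set gn : ℝ → ℝ := fun x => max (-g x) 0 with hgn
  have hgpc : Continuous gp := hcont.max continuous_const
  have hgnc : Continuous gn := hcont.neg.max continuous_const
  have hgpLip : ∀ x y, |gp x - gp y| ≤ L * |x - y| :=
    fun x y => le_trans (abs_max_sub_max_le_abs _ _ _) (hLip x y)
  have hgnLip : ∀ x y, |gn x - gn y| ≤ L * |x - y| := by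
    intro x y
    refine le_trans (abs_max_sub_max_le_abs _ _ _) ?_
    rw [neg_sub_neg, abs_sub_comm]
    exact hLip x y
  have habs : ∀ x, |g x| = g x + 2 * gn x := by
    intro x
    simp only [hgn]
    rcases le_total 0 (g x) with h | h
    · rw [abs_of_nonneg h, max_eq_right (neg_nonpos.mpr h)]
      ring
    · rw [abs_of_nonpos h, max_eq_left (neg_nonneg.mpr h)]
      ring
  have hsub : ∀ x, g x = gp x - gn x := by
    intro x
    simp only [hgp, hgn]
    rcases le_total 0 (g x) with h | h
    · rw [max_eq_left h, max_eq_right (neg_nonpos.mpr h)]; ring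
    · rw [max_eq_right h, max_eq_left (neg_nonneg.mpr h)]; ring
  have hN : (∫ x in a..b, |g x|) = (∫ x in a..b, g x) + 2 * ∫ x in a..b, gn x := by
    rw [show (fun x => |g x|) = fun x => g x + 2 * gn x from funext habs]
    rw [intervalIntegral.integral_add (g := fun x => 2 * gn x) (hcont.intervalIntegrable _ _)
      ((continuous_const.mul hgnc).intervalIntegrable _ _),
      intervalIntegral.integral_const_mul]
  set A : Set ℝ := {x | x ∈ Set.Icc a b ∧ 0 < g x} with hA
  set B : Set ℝ := {x | x ∈ Set.Icc a b ∧ g x < 0} with hB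
  have hAeq : A = Set.Icc a b ∩ g ⁻¹' (Set.Ioi 0) := by
    ext x; simp only [hA, Set.mem_setOf_eq, Set.mem_inter_iff, Set.mem_preimage, Set.mem_Ioi]
  have hBeq : B = Set.Icc a b ∩ g ⁻¹' (Set.Iio 0) := by
    ext x; simp only [hB, Set.mem_setOf_eq, Set.mem_inter_iff, Set.mem_preimage, Set.mem_Iio]
  have hAm : MeasurableSet A := by
    rw [hAeq]; exact measurableSet_Icc.inter (hcont.measurable measurableSet_Ioi)
  have hBm : MeasurableSet B := by
    rw [hBeq]; exact measurableSet_Icc.inter (hcont.measurable measurableSet_Iio)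
  have hdisjAB : Disjoint A B := by
    rw [Set.disjoint_left]
    intro x hx hx'
    exact absurd hx.2 (not_lt.mpr hx'.2.le)
  have hABfin : volume A < ⊤ ∧ volume B < ⊤ := by
    constructor <;>
      exact lt_of_le_of_lt (measure_mono (fun x hx => hx.1)) (by simp)
  have hsum : volume A + volume B ≤ ENNReal.ofReal (b - a) := by
    rw [← measure_union hdisjAB hBm, ← Real.volume_Icc]
    exact measure_mono (Set.union_subset (fun x hx => hx.1) (fun x hx => hx.1))
  set α := (volume A).toReal with hα
  set β := (volume B).toReal with hβdef
  have hαβ : α + β ≤ b - a := by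
    rw [hα, hβdef, ← ENNReal.toReal_add hABfin.1.ne hABfin.2.ne]
    calc (volume A + volume B).toReal ≤ (ENNReal.ofReal (b - a)).toReal :=
          ENNReal.toReal_mono ENNReal.ofReal_ne_top hsum
      _ = b - a := ENNReal.toReal_ofReal (by linarith)
  have hα0 : 0 ≤ α := ENNReal.toReal_nonneg
  have hβ0 : 0 ≤ β := ENNReal.toReal_nonneg
  have hNbound : (∫ x in a..b, gn x) ≤ L * ((b - a) / 2) ^ 2 / 2 := by
    by_cases hc : β ≤ (b - a) / 2
    · -- the set where g < 0 is small; bound N directly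
      have hzex : ∃ z ∈ Set.Icc a b, 0 ≤ g z := by
        by_contra hno
        push_neg at hno
        have hpos : 0 < ∫ x in a..b, -g x := by
          apply intervalIntegral.intervalIntegral_pos_of_pos_on
          · exact (hcont.neg.intervalIntegrable _ _)
          · intro x hx
            have := hno x ⟨hx.1.le, hx.2.le⟩
            linarith
          · exact hab'
        rw [intervalIntegral.integral_neg] at hpos
        linarith
      obtain ⟨z, hzI, hz0⟩ := hzex
      have hseteq : {x | x ∈ Set.Icc a b ∧ 0 < gn x} = B := by
        ext x
        simp only [Set.mem_setOf_eq, hB, hgn, lt_max_iff]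
        constructor
        · rintro ⟨h1, h2 | h2⟩
          · exact ⟨h1, by linarith⟩
          · exact absurd h2 (lt_irrefl 0)
        · rintro ⟨h1, h2⟩
          exact ⟨h1, Or.inl (by linarith)⟩
      apply lemA L hL gn hgnLip (fun x => le_max_right _ _) a b hab z hzI
        (by simp only [hgn]; exact max_eq_right (neg_nonpos.mpr hz0)) ((b - a) / 2)
        (by linarith) (by rw [hseteq]; exact hc)
    · -- the set where g > 0 is small; bound P and use N ≤ P
      push_neg at hc
      have hαsmall : α ≤ (b - a) / 2 := by linarith
      have hBne : B.Nonempty := by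
        rcases Set.eq_empty_or_nonempty B with h | h
        · exfalso
          rw [h] at hβdef
          simp at hβdef
          rw [hβdef] at hc
          linarith
        · exact h
      obtain ⟨z, hzI, hzneg⟩ := hBne
      have hseteq : {x | x ∈ Set.Icc a b ∧ 0 < gp x} = A := by
        ext x
        simp only [Set.mem_setOf_eq, hA, hgp, lt_max_iff]
        constructor
        · rintro ⟨h1, h2 | h2⟩
          · exact ⟨h1, h2⟩
          · exact absurd h2 (lt_irrefl 0)
        · rintro ⟨h1, h2⟩
          exact ⟨h1, Or.inl h2⟩
      have hP : (∫ x in a..b, gp x) ≤ L * ((b - a) / 2) ^ 2 / 2 :=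
        lemA L hL gp hgpLip (fun x => le_max_right _ _) a b hab z hzI
          (by simp only [hgp]; exact max_eq_right hzneg.le) ((b - a) / 2)
          (by linarith) (by rw [hseteq]; exact hαsmall)
      have hPN : (∫ x in a..b, g x) = (∫ x in a..b, gp x) - ∫ x in a..b, gn x := by
        rw [show (fun x => g x) = fun x => gp x - gn x from funext hsub]
        exact intervalIntegral.integral_sub (hgpc.intervalIntegrable _ _)
          (hgnc.intervalIntegrable _ _)
      have : (∫ x in a..b, gn x) ≤ ∫ x in a..b, gp x := by linarith
      linarith
  rw [hN]
  have : L * ((b - a) / 2) ^ 2 / 2 = L * (b - a) ^ 2 / 8 := by ring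
  rw [this] at hNbound
  linarith

private lemma key (L : ℝ) (hL : 0 < L) (g : ℝ → ℝ)
    (hLip : ∀ x y, |g x - g y| ≤ L * |x - y|)
    (a b : ℝ) (hab : a ≤ b) :
    (∫ x in a..b, |g x|) ≤ |∫ x in a..b, g x| + L * (b - a) ^ 2 / 4 := by
  rcases le_total 0 (∫ x in a..b, g x) with h | h
  · rw [abs_of_nonneg h]
    exact key_half L hL g hLip a b hab h
  · have hLip' : ∀ x y, |(-g x) - (-g y)| ≤ L * |x - y| := by
      intro x y
      rw [neg_sub_neg, abs_sub_comm]
      exact hLip x y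
    have h' : 0 ≤ ∫ x in a..b, -g x := by
      rw [intervalIntegral.integral_neg]; linarith
    have hk := key_half L hL (fun x => -g x) hLip' a b hab h'
    rw [abs_of_nonpos h]
    have h1 : (∫ x in a..b, |-g x|) = ∫ x in a..b, |g x| := by
      simp
    rw [h1, intervalIntegral.integral_neg] at hk
    linarith

/-- discretization preserves the ℓ¹ distance to uniform up to `L/m`.  If `p`
is a probability measure on `[0,1]` with `L`-Lipschitz density `f`, `γ = ∫₀¹ |f − 1|`, and
`p^Δ_i = ∫_{i/m}^{(i+1)/m} f` is the discretization into `m` bins, then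
`Σ_i |p^Δ_i − 1/m| ≥ γ − L/m`; in particular, if `m ≥ L/(2γ)` then
`Σ_i |p^Δ_i − 1/m| ≥ γ/2`. -/
theorem discretized_l1_distance (L γ : ℝ) (hL : 0 < L) (f : ℝ → ℝ) (m : ℕ) (hm : 1 ≤ m)
    (hLip : ∀ x ∈ Set.Icc (0 : ℝ) 1, ∀ y ∈ Set.Icc (0 : ℝ) 1, |f x - f y| ≤ L * |x - y|)
    (hf0 : ∀ x ∈ Set.Icc (0 : ℝ) 1, 0 ≤ f x)
    (hf1 : (∫ x in (0 : ℝ)..1, f x) = 1)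
    (hγ : (∫ x in (0 : ℝ)..1, |f x - 1|) = γ) :
    γ - L / (m : ℝ)
      ≤ ∑ i ∈ Finset.range m,
          |(∫ x in ((i : ℝ) / (m : ℝ))..(((i : ℝ) + 1) / (m : ℝ)), f x) - 1 / (m : ℝ)| ∧
    (L / (2 * γ) ≤ (m : ℝ) →
      γ / 2 ≤ ∑ i ∈ Finset.range m,
          |(∫ x in ((i : ℝ) / (m : ℝ))..(((i : ℝ) + 1) / (m : ℝ)), f x) - 1 / (m : ℝ)|) := by
  have hm0 : (0:ℝ) < (m:ℝ) := by
    have : (1:ℝ) ≤ (m:ℝ) := by exact_mod_cast hm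
    linarith
  -- the clamp function
  set c : ℝ → ℝ := fun x => max 0 (min 1 x) with hc
  have hcmem : ∀ x, c x ∈ Set.Icc (0:ℝ) 1 :=
    fun x => ⟨le_max_left _ _, max_le (by norm_num) (min_le_left _ _)⟩
  have hceq : ∀ x ∈ Set.Icc (0:ℝ) 1, c x = x := by
    intro x hx
    simp only [hc]
    rw [min_eq_right hx.2, max_eq_right hx.1]
  have hclip : ∀ x y, |c x - c y| ≤ |x - y| := by
    intro x y
    simp only [hc]
    refine le_trans (abs_max_sub_max_le_max _ _ _ _) ?_
    simp only [sub_self, abs_zero]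
    refine max_le (by positivity) ?_
    refine le_trans (abs_min_sub_min_le_max _ _ _ _) ?_
    simp [abs_nonneg]
  -- the clamped function F and its shift G
  set F : ℝ → ℝ := fun x => f (c x) with hF
  have hFLip : ∀ x y, |F x - F y| ≤ L * |x - y| := by
    intro x y
    refine le_trans (hLip (c x) (hcmem x) (c y) (hcmem y)) ?_
    exact mul_le_mul_of_nonneg_left (hclip x y) hL.le
  have hFeq : Set.EqOn f F (Set.Icc (0:ℝ) 1) := by
    intro x hx
    simp only [hF]
    rw [hceq x hx]
  set G : ℝ → ℝ := fun x => F x - 1 with hG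
  have hGLip : ∀ x y, |G x - G y| ≤ L * |x - y| := by
    intro x y
    simp only [hG, sub_sub_sub_cancel_right]
    exact hFLip x y
  have hFcont : Continuous F := by
    have h : LipschitzWith (Real.toNNReal L) F := by
      apply LipschitzWith.of_dist_le_mul
      intro x y
      rw [Real.dist_eq, Real.dist_eq, Real.coe_toNNReal L hL.le]
      exact hFLip x y
    exact h.continuous
  have hGcont : Continuous G := hFcont.sub continuous_const
  -- bins
  have hbin_le : ∀ i : ℕ, ((i:ℝ)/m) ≤ ((i:ℝ)+1)/m := by
    intro i
    gcongr
    linarith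
  have hbin_sub : ∀ i : ℕ, i < m → Set.uIcc ((i:ℝ)/m) (((i:ℝ)+1)/m) ⊆ Set.Icc (0:ℝ) 1 := by
    intro i him
    rw [Set.uIcc_of_le (hbin_le i)]
    apply Set.Icc_subset_Icc
    · positivity
    · rw [div_le_one hm0]
      have : (i:ℝ) + 1 ≤ (m:ℝ) := by exact_mod_cast Nat.succ_le_of_lt him
      linarith
  -- replace f by F in all integrals
  have hrwf : ∀ i : ℕ, i < m →
      (∫ x in ((i:ℝ)/m)..(((i:ℝ)+1)/m), f x) = ∫ x in ((i:ℝ)/m)..(((i:ℝ)+1)/m), F x := by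
    intro i him
    exact intervalIntegral.integral_congr (hFeq.mono (hbin_sub i him))
  have hγF : (∫ x in (0:ℝ)..1, |F x - 1|) = γ := by
    rw [← hγ]
    apply intervalIntegral.integral_congr
    intro x hx
    rw [Set.uIcc_of_le (by norm_num : (0:ℝ) ≤ 1)] at hx
    show |F x - 1| = |f x - 1|
    rw [← hFeq hx]
  -- width of each bin
  have hwidth : ∀ i : ℕ, ((i:ℝ)+1)/m - (i:ℝ)/m = 1/m := by
    intro i
    field_simp
    ring
  -- per-bin integral of G
  have hbinG : ∀ i : ℕ, (∫ x in ((i:ℝ)/m)..(((i:ℝ)+1)/m), G x)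
      = (∫ x in ((i:ℝ)/m)..(((i:ℝ)+1)/m), F x) - 1/m := by
    intro i
    simp only [hG]
    rw [intervalIntegral.integral_sub (hFcont.intervalIntegrable _ _)
      (continuous_const.intervalIntegrable _ _), intervalIntegral.integral_const, hwidth i]
    simp
  -- the sum of bin integrals of |G| equals γ
  have hsum : (∑ i ∈ Finset.range m, ∫ x in ((i:ℝ)/m)..(((i:ℝ)+1)/m), |G x|) = γ := by
    have hadj := intervalIntegral.sum_integral_adjacent_intervals
      (a := fun k : ℕ => (k:ℝ)/m) (μ := volume) (f := fun x => |G x|) (n := m)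
      (fun k _ => (hGcont.abs.intervalIntegrable _ _))
    simp only [Nat.cast_zero, zero_div] at hadj
    have h1 : ((m:ℕ):ℝ)/(m:ℝ) = 1 := div_self hm0.ne'
    rw [h1] at hadj
    rw [← hγF, ← hadj]
    apply Finset.sum_congr rfl
    intro i _
    congr 1
    push_cast
    ring
  set T := ∑ i ∈ Finset.range m,
      |(∫ x in ((i:ℝ)/m)..(((i:ℝ)+1)/m), f x) - 1/(m:ℝ)| with hT
  have hper : ∀ i : ℕ, i < m → (∫ x in ((i:ℝ)/m)..(((i:ℝ)+1)/m), |G x|)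
      ≤ |(∫ x in ((i:ℝ)/m)..(((i:ℝ)+1)/m), f x) - 1/(m:ℝ)| + L * (1/m)^2/4 := by
    intro i him
    have hk := key L hL G hGLip _ _ (hbin_le i)
    rw [hbinG i, hwidth i] at hk
    rw [hrwf i him]
    exact hk
  have hγT : γ ≤ T + L/(4*m) := by
    rw [← hsum, hT]
    calc (∑ i ∈ Finset.range m, ∫ x in ((i:ℝ)/m)..(((i:ℝ)+1)/m), |G x|)
        ≤ ∑ i ∈ Finset.range m,
          (|(∫ x in ((i:ℝ)/m)..(((i:ℝ)+1)/m), f x) - 1/(m:ℝ)| + L * (1/m)^2/4) :=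
          Finset.sum_le_sum (fun i hi => hper i (Finset.mem_range.mp hi))
      _ = (∑ i ∈ Finset.range m,
          |(∫ x in ((i:ℝ)/m)..(((i:ℝ)+1)/m), f x) - 1/(m:ℝ)|) + m * (L * (1/m)^2/4) := by
          rw [Finset.sum_add_distrib, Finset.sum_const, Finset.card_range, nsmul_eq_mul]
      _ = (∑ i ∈ Finset.range m,
          |(∫ x in ((i:ℝ)/m)..(((i:ℝ)+1)/m), f x) - 1/(m:ℝ)|) + L/(4*m) := by
          congr 1
          field_simp
  have hT0 : 0 ≤ T := Finset.sum_nonneg (fun i _ => abs_nonneg _)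
  have hγ0 : 0 ≤ γ := by
    rw [← hγ]
    exact intervalIntegral.integral_nonneg (by norm_num) (fun x _ => abs_nonneg _)
  constructor
  · have h14 : L/(4*m) ≤ L/m := by
      rw [div_le_div_iff₀ (by positivity) hm0]
      nlinarith
    linarith
  · intro h2
    rcases eq_or_lt_of_le hγ0 with h | h
    · rw [← h]
      norm_num
      exact hT0
    · have hLm : L ≤ 2*γ*m := by
        rw [div_le_iff₀ (by positivity)] at h2
        linarith
      have h24 : L/(4*m) ≤ γ/2 := by
        rw [div_le_div_iff₀ (by positivity) (by norm_num : (0:ℝ) < 2)]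
        nlinarith
      linarith
end

section
/- Let m ≥ 1 and let p = (p₁,…,p_m) be a probability vector (p_j ≥ 0, Σ_j p_j = 1), let γ = Σ_{j=1}^m |p_j − 1/m|, and let 𝒲 = { j : p_j ≥ 8/m }. Then m · Σ_{j ∉ 𝒲} p_j² + 2 Σ_{j ∈ 𝒲} p_j ≥ 1 + γ²/4. -/
open scoped Classical

/-- with `𝒲 = {j : p_j ≥ 8/m}` the set of heavy symbols and
`γ = Σ_j |p_j − 1/m|`, one has `m Σ_{j∉𝒲} p_j² + 2 Σ_{j∈𝒲} p_j ≥ 1 + γ²/4`. -/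
theorem heavy_light_second_moment (m : ℕ) (hm : 1 ≤ m) (p : Fin m → ℝ)
    (hp0 : ∀ j, 0 ≤ p j) (hp1 : ∑ j, p j = 1) (γ : ℝ)
    (hγ : γ = ∑ j, |p j - 1 / (m : ℝ)|) :
    1 + γ ^ 2 / 4
      ≤ (m : ℝ) * ∑ j ∈ Finset.univ.filter (fun j : Fin m => ¬ (8 / (m : ℝ) ≤ p j)),
            (p j) ^ 2
        + 2 * ∑ j ∈ Finset.univ.filter (fun j : Fin m => 8 / (m : ℝ) ≤ p j), p j := by
  classical
  have hm0 : (0:ℝ) < m := by exact_mod_cast hm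
  set W := Finset.univ.filter (fun j : Fin m => 8 / (m : ℝ) ≤ p j) with hWdef
  set L := Finset.univ.filter (fun j : Fin m => ¬ (8 / (m : ℝ) ≤ p j)) with hLdef
  set d : Fin m → ℝ := fun j => p j - 1 / m with hd
  have hdsum : ∑ j, d j = 0 := by
    have : ∑ j : Fin m, d j = (∑ j, p j) - (m : ℝ) * (1 / m) := by
      rw [Finset.sum_sub_distrib, Finset.sum_const, Finset.card_univ,
        Fintype.card_fin, nsmul_eq_mul]
    rw [this, hp1]
    field_simp
    norm_num
  have hγ' : γ = ∑ j ∈ W, |d j| + ∑ j ∈ L, |d j| := by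
    rw [hγ, ← Finset.sum_filter_add_sum_filter_not Finset.univ
      (fun j => 8 / (m:ℝ) ≤ p j) (fun j => |p j - 1 / (m:ℝ)|)]
  have hγnn : 0 ≤ γ := by
    rw [hγ]; positivity
  have hW2 : ∑ j ∈ W, |d j| ≤ γ / 2 := by
    have h1 : ∀ j ∈ W, |d j| = (d j + |d j|) / 2 := by
      intro j hj
      have hj8 : 8 / (m:ℝ) ≤ p j := (Finset.mem_filter.mp hj).2
      have h1m : (1:ℝ) / m ≤ 8 / m := by
        rw [div_le_div_iff₀ hm0 hm0]; nlinarith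
      have hdj : 0 ≤ d j := by
        simp only [hd]; linarith
      rw [abs_of_nonneg hdj]; ring
    calc ∑ j ∈ W, |d j| = ∑ j ∈ W, (d j + |d j|) / 2 := Finset.sum_congr rfl h1
      _ ≤ ∑ j, (d j + |d j|) / 2 := by
          apply Finset.sum_le_sum_of_subset_of_nonneg (Finset.filter_subset _ _)
          intro j _ _
          simp only [hd]
          have := neg_abs_le (p j - 1 / (m:ℝ))
          linarith
      _ = γ / 2 := by
          rw [← Finset.sum_div, Finset.sum_add_distrib, hdsum, zero_add, hγ]
  have hγL : γ / 2 ≤ ∑ j ∈ L, |d j| := by linarith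
  have hCS : (∑ j ∈ L, |d j|) ^ 2 ≤ (L.card : ℝ) * ∑ j ∈ L, (d j) ^ 2 := by
    have := sq_sum_le_card_mul_sum_sq (s := L) (f := fun j => |d j|)
    simpa [sq_abs] using this
  have hcard : (L.card : ℝ) ≤ m := by
    have := Finset.card_filter_le Finset.univ (fun j : Fin m => ¬ (8 / (m : ℝ) ≤ p j))
    rw [Finset.card_univ, Fintype.card_fin] at this
    exact_mod_cast this
  have hsq_nn : 0 ≤ ∑ j ∈ L, (d j) ^ 2 := by positivity
  have hCS' : (∑ j ∈ L, |d j|) ^ 2 ≤ (m : ℝ) * ∑ j ∈ L, (d j) ^ 2 :=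
    hCS.trans (mul_le_mul_of_nonneg_right hcard hsq_nn)
  have hsplit : ∑ j ∈ W, p j + ∑ j ∈ L, p j = 1 := by
    rw [← hp1]
    exact Finset.sum_filter_add_sum_filter_not Finset.univ _ _
  have hexp : ∑ j ∈ L, (p j) ^ 2
      = ∑ j ∈ L, (d j) ^ 2 + (2 / m) * ∑ j ∈ L, d j + (L.card : ℝ) / m ^ 2 := by
    have : ∀ j ∈ L, (p j) ^ 2 = (d j) ^ 2 + (2 / m) * d j + 1 / m ^ 2 := by
      intro j _
      simp only [hd]
      field_simp
      ring
    rw [Finset.sum_congr rfl this]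
    simp only [Finset.sum_add_distrib, Finset.sum_const, nsmul_eq_mul, Finset.mul_sum]
    ring
  have hdL : ∑ j ∈ L, d j = ∑ j ∈ L, p j - (L.card : ℝ) / m := by
    simp only [hd]
    rw [Finset.sum_sub_distrib, Finset.sum_const, nsmul_eq_mul]
    ring
  have hγsq : (γ / 2) ^ 2 ≤ (∑ j ∈ L, |d j|) ^ 2 := by
    apply pow_le_pow_left₀ (by linarith) hγL
  have key : (m : ℝ) * ∑ j ∈ L, (p j) ^ 2 + 2 * ∑ j ∈ W, p j
      = (m : ℝ) * ∑ j ∈ L, (d j) ^ 2 + 2 - (L.card : ℝ) / m := by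
    have hm' : (m:ℝ) ≠ 0 := ne_of_gt hm0
    have hWp : ∑ j ∈ W, p j = 1 - ∑ j ∈ L, p j := by linarith
    rw [hexp, hdL, hWp]
    field_simp
    ring
  rw [key]
  have hc1 : (L.card : ℝ) / m ≤ 1 := by
    rw [div_le_one hm0]; exact hcard
  nlinarith [hCS', hγsq, hc1]
end

section
/- Fix θ ∈ (0, 2/5]. Define, for x ≥ 0, D(x) = (e^{−θ} + e^{−x}(1 − e^{−θ})) / (1 + x e^{−x}(e^{θ} − 1)) and E(x) = (e^{−θ} − 1)(1 − e^{−x}). Then: (i) for every x > 0, 1 ≤ (D(x) − 1)/E(x) ≤ 1 + e^{θ}, equivalently (1 + e^{θ}) E(x) ≤ D(x) − 1 ≤ E(x); (ii) the function x ↦ (D(x) − 1)/E(x) is nonincreasing on (0, ∞); and (iii) e^{−2θ} ≤ D(x) ≤ 1 for all x ≥ 0. -/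
/-- `D(x) = (e^{−θ} + e^{−x}(1 − e^{−θ})) / (1 + x e^{−x}(e^{θ} − 1))`. -/
noncomputable def Dfun (θ x : ℝ) : ℝ :=
  (Real.exp (-θ) + Real.exp (-x) * (1 - Real.exp (-θ)))
    / (1 + x * Real.exp (-x) * (Real.exp θ - 1))

/-- `E(x) = (e^{−θ} − 1)(1 − e^{−x})`. -/
noncomputable def Efun (θ x : ℝ) : ℝ :=
  (Real.exp (-θ) - 1) * (1 - Real.exp (-x))

/-- Auxiliary: the ratio `(D(x)-1)/E(x)` in a nicer closed form. -/
noncomputable def Rfun (a x : ℝ) : ℝ :=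
  (a * (Real.exp x - 1) + x) / (a * (Real.exp x - 1) + x * (1 - a) * (1 - Real.exp (-x)))

lemma hQ1aux (x : ℝ) : 0 ≤ Real.exp x * (x - 1) + 1 := by
  have h := Real.add_one_le_exp (-x)
  have hu : 0 < Real.exp x := Real.exp_pos x
  have huv : Real.exp x * Real.exp (-x) = 1 := by
    rw [← Real.exp_add]; simp
  nlinarith [mul_le_mul_of_nonneg_left h hu.le]

lemma hQ2aux {x : ℝ} (hx : 0 ≤ x) : 0 ≤ 2 * x - 1 + Real.exp (-x) - x * Real.exp (-x) := by
  have h := Real.add_one_le_exp (-x)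
  have hv1 : Real.exp (-x) ≤ 1 := by
    rw [Real.exp_le_one_iff]; linarith
  nlinarith [mul_nonneg hx (sub_nonneg.2 hv1)]

lemma den_pos_aux {a x : ℝ} (ha0 : 0 < a) (ha1 : a < 1) (hx : 0 < x) :
    0 < a * (Real.exp x - 1) + x * (1 - a) * (1 - Real.exp (-x)) := by
  have h1 : 1 < Real.exp x := by rw [Real.one_lt_exp_iff]; exact hx
  have h2 : Real.exp (-x) < 1 := by rw [Real.exp_lt_one_iff]; linarith
  have := mul_pos ha0 (by linarith : (0:ℝ) < Real.exp x - 1)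
  nlinarith [mul_pos (mul_pos hx (by linarith : (0:ℝ) < 1 - a))
    (by linarith : (0:ℝ) < 1 - Real.exp (-x))]

lemma anti_aux (a : ℝ) (ha0 : 0 < a) (ha1 : a < 1) : AntitoneOn (Rfun a) (Set.Ioi 0) := by
  have hconv : Convex ℝ (Set.Ioi (0:ℝ)) := convex_Ioi 0
  have hnum : ∀ x : ℝ, HasDerivAt (fun x => a * (Real.exp x - 1) + x) (a * Real.exp x + 1) x := by
    intro x
    have := ((Real.hasDerivAt_exp x).sub_const 1).const_mul a |>.add (hasDerivAt_id x)
    exact this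
  have hexpneg : ∀ x : ℝ, HasDerivAt (fun x => Real.exp (-x)) (-Real.exp (-x)) x := by
    intro x
    have h := (Real.hasDerivAt_exp (-x)).comp x ((hasDerivAt_id x).neg)
    simp at h
    exact h
  have hden : ∀ x : ℝ, HasDerivAt (fun x => a * (Real.exp x - 1) + x * (1 - a) * (1 - Real.exp (-x)))
      (a * Real.exp x + ((1 - a) * (1 - Real.exp (-x)) + x * (1 - a) * Real.exp (-x))) x := by
    intro x
    have h1 := ((Real.hasDerivAt_exp x).sub_const 1).const_mul a
    have h2 : HasDerivAt (fun x : ℝ => x * (1 - a)) (1 - a) x := by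
      simpa using (hasDerivAt_id x).mul_const (1 - a)
    have h3 : HasDerivAt (fun x : ℝ => 1 - Real.exp (-x)) (Real.exp (-x)) x := by
      have h := (hasDerivAt_const x (1:ℝ)).sub (hexpneg x)
      simp at h
      exact h
    have h5 := h1.add (h2.mul h3)
    exact h5
  have hdf : ∀ x ∈ Set.Ioi (0:ℝ), HasDerivAt (Rfun a)
      (((a * Real.exp x + 1) * (a * (Real.exp x - 1) + x * (1 - a) * (1 - Real.exp (-x)))
        - (a * (Real.exp x - 1) + x) * (a * Real.exp x + ((1 - a) * (1 - Real.exp (-x)) + x * (1 - a) * Real.exp (-x))))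
        / (a * (Real.exp x - 1) + x * (1 - a) * (1 - Real.exp (-x)))^2) x := by
    intro x hx
    exact (hnum x).div (hden x) (den_pos_aux ha0 ha1 hx).ne'
  apply antitoneOn_of_deriv_nonpos hconv
  · intro x hx
    exact ((hdf x hx).continuousAt).continuousWithinAt
  · rw [interior_Ioi]
    intro x hx
    exact (hdf x hx).differentiableAt.differentiableWithinAt
  · rw [interior_Ioi]
    intro x hx
    rw [(hdf x hx).deriv]
    apply div_nonpos_of_nonpos_of_nonneg _ (sq_nonneg _)
    have key : (a * Real.exp x + 1) * (a * (Real.exp x - 1) + x * (1 - a) * (1 - Real.exp (-x)))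
        - (a * (Real.exp x - 1) + x) * (a * Real.exp x + ((1 - a) * (1 - Real.exp (-x)) + x * (1 - a) * Real.exp (-x)))
        = -(a^2 * (Real.exp x * (x - 1) + 1) + a * (1 - a) * (2 * x - 1 + Real.exp (-x) - x * Real.exp (-x))
          + (1 - a) * x^2 * Real.exp (-x)) := by
      have hv : Real.exp (-x) = (Real.exp x)⁻¹ := Real.exp_neg x
      rw [hv]
      field_simp
      ring
    rw [key]
    have h1 := hQ1aux x
    have h2 := hQ2aux (le_of_lt hx)
    have h3 : 0 ≤ (1 - a) * x^2 * Real.exp (-x) :=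
      mul_nonneg (mul_nonneg (by linarith) (sq_nonneg x)) (Real.exp_pos _).le
    nlinarith [mul_nonneg (mul_nonneg ha0.le ha0.le) h1,
      mul_nonneg (mul_nonneg ha0.le (by linarith : (0:ℝ) ≤ 1 - a)) h2]

lemma key_eq_aux (θ : ℝ) (hθ : 0 < θ) {x : ℝ} (hx : 0 < x) :
    (Dfun θ x - 1) / Efun θ x = Rfun (Real.exp (-θ)) x := by
  have hA1 : 1 < Real.exp θ := by rw [Real.one_lt_exp_iff]; exact hθ
  have hu1 : 1 < Real.exp x := by rw [Real.one_lt_exp_iff]; exact hx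
  have hA0 : (Real.exp θ) ≠ 0 := (Real.exp_pos _).ne'
  have hu0 : (Real.exp x) ≠ 0 := (Real.exp_pos _).ne'
  rw [Dfun, Efun, Rfun, Real.exp_neg θ, Real.exp_neg x]
  have h1 : (1 : ℝ) + x * (Real.exp x)⁻¹ * (Real.exp θ - 1) ≠ 0 := by
    have : 0 < x * (Real.exp x)⁻¹ * (Real.exp θ - 1) := by
      apply mul_pos (mul_pos hx (by positivity)); linarith
    positivity
  have h2 : ((Real.exp θ)⁻¹ - 1 : ℝ) ≠ 0 := by
    have : (Real.exp θ)⁻¹ < 1 := by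
      rw [inv_lt_one_iff₀]; right; exact hA1
    linarith
  have h3 : ((1 : ℝ) - (Real.exp x)⁻¹) ≠ 0 := by
    have : (Real.exp x)⁻¹ < 1 := by
      rw [inv_lt_one_iff₀]; right; exact hu1
    linarith
  have h4 : ((Real.exp θ)⁻¹ * (Real.exp x - 1) + x * (1 - (Real.exp θ)⁻¹) * (1 - (Real.exp x)⁻¹)) ≠ 0 := by
    have hi1 : (0:ℝ) < (Real.exp θ)⁻¹ * (Real.exp x - 1) := by
      apply mul_pos (by positivity); linarith
    have hi2 : (0:ℝ) ≤ x * (1 - (Real.exp θ)⁻¹) * (1 - (Real.exp x)⁻¹) := by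
      apply mul_nonneg (mul_nonneg hx.le _) _
      · have : (Real.exp θ)⁻¹ < 1 := by rw [inv_lt_one_iff₀]; right; exact hA1
        linarith
      · have : (Real.exp x)⁻¹ < 1 := by rw [inv_lt_one_iff₀]; right; exact hu1
        linarith
    positivity
  rw [div_sub' h1, div_div, div_eq_div_iff (mul_ne_zero h1 (mul_ne_zero h2 h3)) h4]
  field_simp
  ring

theorem D_E_properties (θ : ℝ) (hθ : θ ∈ Set.Ioc (0 : ℝ) (2 / 5)) :
    (∀ x > (0 : ℝ),
        1 ≤ (Dfun θ x - 1) / Efun θ x ∧ (Dfun θ x - 1) / Efun θ x ≤ 1 + Real.exp θ ∧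
        (1 + Real.exp θ) * Efun θ x ≤ Dfun θ x - 1 ∧ Dfun θ x - 1 ≤ Efun θ x) ∧
      AntitoneOn (fun x => (Dfun θ x - 1) / Efun θ x) (Set.Ioi (0 : ℝ)) ∧
      ∀ x ≥ (0 : ℝ), Real.exp (-2 * θ) ≤ Dfun θ x ∧ Dfun θ x ≤ 1 := by
  obtain ⟨hθ0, hθ2⟩ := hθ
  set a := Real.exp (-θ) with ha_def
  set A := Real.exp θ with hA_def
  have ha0 : 0 < a := Real.exp_pos _
  have ha1 : a < 1 := by rw [ha_def, Real.exp_lt_one_iff]; linarith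
  have hA1 : 1 < A := by rw [hA_def, Real.one_lt_exp_iff]; exact hθ0
  have haA : a * A = 1 := by rw [ha_def, hA_def, ← Real.exp_add]; simp
  -- common per-point facts
  have hpoint : ∀ x : ℝ, 0 ≤ x →
      0 < Real.exp (-x) ∧ Real.exp (-x) ≤ 1 ∧ x * Real.exp (-x) ≤ 1 - Real.exp (-x) ∧
      0 < 1 + x * Real.exp (-x) * (A - 1) := by
    intro x hx
    have ht0 : 0 < Real.exp (-x) := Real.exp_pos _
    have ht1 : Real.exp (-x) ≤ 1 := by rw [Real.exp_le_one_iff]; linarith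
    have hut : Real.exp x * Real.exp (-x) = 1 := by rw [← Real.exp_add]; simp
    have hxe := Real.add_one_le_exp x
    have hxt : x * Real.exp (-x) ≤ 1 - Real.exp (-x) := by
      nlinarith [mul_le_mul_of_nonneg_right hxe ht0.le]
    have hDden : 0 < 1 + x * Real.exp (-x) * (A - 1) := by
      have : 0 ≤ x * Real.exp (-x) * (A - 1) :=
        mul_nonneg (mul_nonneg hx ht0.le) (by linarith)
      linarith
    exact ⟨ht0, ht1, hxt, hDden⟩
  refine ⟨?_, ?_, ?_⟩
  · -- part (i)
    intro x hx
    obtain ⟨ht0, ht1, hxt, hDden⟩ := hpoint x hx.le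
    set t := Real.exp (-x) with ht_def
    have ht1' : t < 1 := by rw [ht_def, Real.exp_lt_one_iff]; linarith
    have hE : Efun θ x < 0 := by
      rw [Efun, ← ha_def, ← ht_def]
      apply mul_neg_of_neg_of_pos (by linarith) (by linarith)
    have hD1 : Dfun θ x - 1 = ((a - 1) * (1 - t) - x * t * (A - 1)) / (1 + x * t * (A - 1)) := by
      rw [Dfun, ← ha_def, ← hA_def, ← ht_def]
      rw [div_sub_one hDden.ne']
      congr 1; ring
    have hupper : Dfun θ x - 1 ≤ Efun θ x := by
      rw [hD1, Efun, ← ha_def, ← ht_def, div_le_iff₀ hDden]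
      nlinarith [mul_nonneg (mul_nonneg (mul_nonneg hx.le ht0.le) (by linarith : (0:ℝ) ≤ A - 1))
        (by nlinarith : (0:ℝ) ≤ 1 - (1 - a) * (1 - t))]
    have hlower : (1 + A) * Efun θ x ≤ Dfun θ x - 1 := by
      rw [hD1, Efun, ← ha_def, ← ht_def, le_div_iff₀ hDden]
      have hkey : (a - 1) * (1 - t) - x * t * (A - 1) - (1 + A) * ((a - 1) * (1 - t)) * (1 + x * t * (A - 1))
          = (A - 1) * (((1 - t) - x * t) + x * t * (1 - t) * (A - a)) := by
        linear_combination (-(1 - t) * (1 + x * t * (A - 1))) * haA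
      have hnn : 0 ≤ (A - 1) * (((1 - t) - x * t) + x * t * (1 - t) * (A - a)) := by
        apply mul_nonneg (by linarith)
        have : 0 ≤ x * t * (1 - t) * (A - a) :=
          mul_nonneg (mul_nonneg (mul_nonneg hx.le ht0.le) (by linarith)) (by linarith)
        linarith
      nlinarith [hkey]
    refine ⟨?_, ?_, hlower, hupper⟩
    · rw [le_div_iff_of_neg hE]
      linarith
    · rw [div_le_iff_of_neg hE]
      exact hlower
  · -- part (ii)
    exact (anti_aux a ha0 ha1).congr fun x hx => (key_eq_aux θ hθ0 hx).symm
  · -- part (iii)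
    intro x hx
    obtain ⟨ht0, ht1, hxt, hDden⟩ := hpoint x hx
    set t := Real.exp (-x) with ht_def
    have hNnn : Dfun θ x = (a + t * (1 - a)) / (1 + x * t * (A - 1)) := by
      rw [Dfun, ← ha_def, ← hA_def, ← ht_def]
    constructor
    · have hsq : Real.exp (-2 * θ) = a ^ 2 := by
        rw [ha_def, sq, ← Real.exp_add]
        congr 1
        ring
      rw [hsq, hNnn, le_div_iff₀ hDden]
      have h6 : a * a * A = a := by
        calc a * a * A = a * (a * A) := by ring
        _ = a := by rw [haA]; ring
      have h5 : a * (x * t) ≤ a * (1 - t) := mul_le_mul_of_nonneg_left hxt ha0.le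
      have h7 : 0 ≤ (1 - a) * (a + t - a * (x * t)) := by
        apply mul_nonneg (by linarith)
        nlinarith [h5]
      nlinarith [h6, h7, mul_le_mul_of_nonneg_left hxt (mul_nonneg ha0.le ha0.le)]
    · rw [hNnn, div_le_one hDden]
      nlinarith [mul_nonneg (mul_nonneg hx ht0.le) (by linarith : (0:ℝ) ≤ A - 1),
        mul_nonneg (by linarith : (0:ℝ) ≤ 1 - a) (by linarith : (0:ℝ) ≤ 1 - t)]
end
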